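/- Let r > 1 be real, let K be a number field, and let h ≥ 1 be an integer such that for every integer d with 2 ≤ d ≤ h one has d^{-r} > ∑_{n > d} a_K(n)·n^{-r}. Then the closure of σ_{r,K}(I_K) has at least ∏_{n=2}^{h} (b_K(n) + 1) connected components. -/

import Mathlib

open NumberField

/-- The ideal divisor function `σ_{r,K}(I) = ∑_{J ∣ I} N(J)^{-r}`. -/
noncomputable def sigmaK (K : Type*) [Field K] [NumberField K] (r : ℝ)
    (I : Ideal (𝓞 K)) : ℝ :=
  ∑' J : {J : Ideal (𝓞 K) // J ∣ I}, (Ideal.absNorm (J : Ideal (𝓞 K)) : ℝ) ^ (-r)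

/-- `a_K(n)`: the number of nonzero integral ideals of `𝓞_K` of absolute norm `n`. -/
noncomputable def aK (K : Type*) [Field K] [NumberField K] (n : ℕ) : ℕ :=
  {I : Ideal (𝓞 K) | Ideal.absNorm I = n}.ncard

/-- `b_K(n)`: the number of nonzero prime ideals of `𝓞_K` of absolute norm `n`. -/
noncomputable def bK (K : Type*) [Field K] [NumberField K] (n : ℕ) : ℕ :=
  {P : Ideal (𝓞 K) | P.IsPrime ∧ Ideal.absNorm P = n}.ncard


set_option linter.unusedSectionVars false
set_option maxHeartbeats 1000000


section DivisorStructure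
variable {M : Type*} [CommMonoidWithZero M] [Unique Mˣ] [UniqueFactorizationMonoid M]

theorem eq_of_prime_dvd_prime {P Q : M} (hP : Prime P) (hQ : Prime Q) (h : P ∣ Q) : P = Q :=
  associated_iff_eq.mp ((hP.dvd_prime_iff_associated hQ).mp h)

theorem dvd_prod_of_primes {T : Finset M} (hT : ∀ P ∈ T, Prime P) {J : M}
    (hJ : J ∣ ∏ P ∈ T, P) : ∃ U ⊆ T, J = ∏ P ∈ U, P := by
  classical
  induction T using Finset.induction_on generalizing J with
  | empty =>
    have : J = 1 := isUnit_iff_eq_one.mp (isUnit_of_dvd_one (by simpa using hJ))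
    exact ⟨∅, le_refl _, by simpa using this⟩
  | @insert Q T hQT ih =>
    have hQ : Prime Q := hT Q (Finset.mem_insert_self _ _)
    rw [Finset.prod_insert hQT] at hJ
    by_cases hdvd : Q ∣ J
    · obtain ⟨J', rfl⟩ := hdvd
      have hJ' : J' ∣ ∏ P ∈ T, P := (mul_dvd_mul_iff_left hQ.ne_zero).mp hJ
      obtain ⟨U, hUT, rfl⟩ := ih (fun P hP => hT P (Finset.mem_insert_of_mem hP)) hJ'
      refine ⟨insert Q U, Finset.insert_subset_insert _ hUT, ?_⟩
      rw [Finset.prod_insert (fun hc => hQT (hUT hc))]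
    · have : J ∣ ∏ P ∈ T, P := by
        refine UniqueFactorizationMonoid.dvd_of_dvd_mul_right_of_no_prime_factors
          (fun hc => hdvd (hc ▸ dvd_zero Q)) (fun {p} hpJ hpQ hp =>
            hdvd (eq_of_prime_dvd_prime hp hQ hpQ ▸ hpJ)) hJ
      obtain ⟨U, hUT, rfl⟩ := ih (fun P hP => hT P (Finset.mem_insert_of_mem hP)) this
      exact ⟨U, hUT.trans (Finset.subset_insert _ _), rfl⟩

theorem prod_primes_injOn {T : Finset M} (hT : ∀ P ∈ T, Prime P) {U U' : Finset M}
    (hU : U ⊆ T) (hU' : U' ⊆ T) (h : ∏ P ∈ U, P = ∏ P ∈ U', P) : U = U' := by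
  classical
  have key : ∀ V W : Finset M, V ⊆ T → W ⊆ T → ∏ P ∈ V, P = ∏ P ∈ W, P → V ⊆ W := by
    intro V W hV hW hVW P hP
    have hPp : Prime P := hT P (hV hP)
    have : P ∣ ∏ Q ∈ W, Q := hVW ▸ Finset.dvd_prod_of_mem _ hP
    obtain ⟨Q, hQW, hPQ⟩ := hPp.exists_mem_finset_dvd this
    rwa [eq_of_prime_dvd_prime hPp (hT Q (hW hQW)) hPQ]
  exact le_antisymm (key U U' hU hU' h) (key U' U hU' hU h.symm)
end DivisorStructure


theorem cnt_split {α : Type*} [DecidableEq α] (T : Finset α) (f : α → ℕ)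
    (hT : ∀ a ∈ T, 2 ≤ f a) (n : ℕ) (hn : 2 ≤ n) :
    (T.powerset.filter (fun U => ∏ a ∈ U, f a = n)).card
      = (T.filter (fun a => f a = n)).card
        + ((T.filter (fun a => f a < n)).powerset.filter (fun U => ∏ a ∈ U, f a = n)).card := by
  classical
  set X := T.powerset.filter (fun U => ∏ a ∈ U, f a = n) with hX
  have hsplit := Finset.card_filter_add_card_filter_not
    (s := X) (p := fun U => ∃ a ∈ U, n ≤ f a)
  have h1 : X.filter (fun U => ∃ a ∈ U, n ≤ f a)
      = (T.filter (fun a => f a = n)).image (fun a => {a}) := by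
    ext U
    simp only [Finset.mem_filter, Finset.mem_powerset, Finset.mem_image, hX]
    constructor
    · rintro ⟨⟨hUT, hprod⟩, a, haU, hna⟩
      have h1le : ∀ b ∈ U.erase a, 1 ≤ f b := fun b hb => le_trans (by norm_num)
        (hT b (hUT (Finset.mem_of_mem_erase hb)))
      have hfact : f a * ∏ b ∈ U.erase a, f b = n := by
        rw [← hprod, Finset.mul_prod_erase _ _ haU]
      have hrest : ∏ b ∈ U.erase a, f b = 1 := by
        by_contra hne
        have h2 : 2 ≤ ∏ b ∈ U.erase a, f b :=
          lt_of_le_of_ne (Finset.one_le_prod' h1le) (Ne.symm hne)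
        have h3 : 2 * n ≤ n := by
          calc 2 * n ≤ (∏ b ∈ U.erase a, f b) * f a := Nat.mul_le_mul h2 hna
            _ = n := by rw [mul_comm]; exact hfact
        omega
      have hfa : f a = n := by rw [hrest, mul_one] at hfact; exact hfact
      have hU : U = {a} := by
        have hemp : U.erase a = ∅ := by
          rw [Finset.eq_empty_iff_forall_notMem]
          intro b hb
          have hb2 := hT b (hUT (Finset.mem_of_mem_erase hb))
          have hb3 := Finset.single_le_prod' h1le hb
          omega
        have hins := Finset.insert_erase haU
        rw [← hins, hemp]; rfl
      exact ⟨a, ⟨hUT haU, hfa⟩, hU.symm⟩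
    · rintro ⟨a, ⟨haT, hfa⟩, rfl⟩
      exact ⟨⟨Finset.singleton_subset_iff.mpr haT, by simp [hfa]⟩,
        a, Finset.mem_singleton_self a, le_of_eq hfa.symm⟩
  have h2 : X.filter (fun U => ¬ ∃ a ∈ U, n ≤ f a)
      = (T.filter (fun a => f a < n)).powerset.filter (fun U => ∏ a ∈ U, f a = n) := by
    ext U
    simp only [Finset.mem_filter, Finset.mem_powerset, hX, not_exists, not_and, not_le,
      Finset.subset_iff, Finset.mem_filter]
    constructor
    · rintro ⟨⟨hUT, hprod⟩, hsmall⟩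
      exact ⟨fun x hx => ⟨hUT hx, hsmall x hx⟩, hprod⟩
    · rintro ⟨hUT, hprod⟩
      exact ⟨⟨fun x hx => (hUT hx).1, hprod⟩, fun x hx => (hUT hx).2⟩
  have hcard1 : (X.filter (fun U => ∃ a ∈ U, n ≤ f a)).card
      = (T.filter (fun a => f a = n)).card := by
    rw [h1]
    exact Finset.card_image_of_injective _ (fun a b hab => by
      simpa using Finset.singleton_injective hab)
  rw [hcard1, h2] at hsplit
  omega


section Summ
variable {K : Type*} [Field K] [NumberField K] {r : ℝ}

lemma two_le_absNorm_of_prime {P : Ideal (𝓞 K)} (hP : Prime P) : 2 ≤ Ideal.absNorm P := by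
  have h0 : Ideal.absNorm P ≠ 0 := by
    rw [Ne, Ideal.absNorm_eq_zero_iff]; exact fun hc => hP.ne_zero (by simpa using hc)
  have h1 : Ideal.absNorm P ≠ 1 := by
    rw [Ne, Ideal.absNorm_eq_one_iff]
    exact fun hc => hP.not_unit (Ideal.isUnit_iff.mpr hc)
  omega

lemma card_primes_of_norm_le (k : ℕ) (hk : 2 ≤ k) :
    {P : Ideal (𝓞 K) | Prime P ∧ Ideal.absNorm P = k}.ncard ≤ Module.finrank ℤ (𝓞 K) := by
  classical
  have hfin : {P : Ideal (𝓞 K) | Prime P ∧ Ideal.absNorm P = k}.Finite :=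
    (Ideal.finite_setOf_absNorm_eq k).subset fun P hP => hP.2
  set F := hfin.toFinset with hF
  have hmem : ∀ P ∈ F, Prime P ∧ Ideal.absNorm P = k := by
    intro P hP; rwa [hF, Set.Finite.mem_toFinset] at hP
  have hdvd : ∏ P ∈ F, P ∣ Ideal.span {((k : ℕ) : 𝓞 K)} := by
    refine Finset.prod_primes_dvd _ (fun P hP => (hmem P hP).1) (fun P hP => ?_)
    rw [Ideal.dvd_iff_le, ← (hmem P hP).2]
    exact Ideal.span_singleton_absNorm_le P
  have hnormspan : Ideal.absNorm (Ideal.span {((k : ℕ) : 𝓞 K)}) =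
      k ^ Module.finrank ℤ (𝓞 K) := by
    rw [Ideal.absNorm_span_singleton]
    rw [show ((k : ℕ) : 𝓞 K) = algebraMap ℤ (𝓞 K) (k : ℤ) by push_cast; ring]
    rw [Algebra.norm_algebraMap_of_basis (Module.Free.chooseBasis ℤ (𝓞 K)),
      ← Module.finrank_eq_card_chooseBasisIndex]
    simp [Int.natAbs_pow]
  have hnormprod : Ideal.absNorm (∏ P ∈ F, P) = k ^ F.card := by
    rw [map_prod]
    rw [Finset.prod_congr rfl (fun P hP => (hmem P hP).2), Finset.prod_const]
  have hd : k ^ F.card ∣ k ^ Module.finrank ℤ (𝓞 K) := by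
    rw [← hnormprod, ← hnormspan]; exact map_dvd _ hdvd
  have := (Nat.pow_dvd_pow_iff_le_right (by omega : 1 < k)).mp hd
  rwa [Set.ncard_eq_toFinset_card _ hfin]
  
lemma sum_primes_le (hr : 1 < r) (Q : Finset (Ideal (𝓞 K))) (hQ : ∀ P ∈ Q, Prime P) :
    ∑ P ∈ Q, (Ideal.absNorm P : ℝ) ^ (-r)
      ≤ (Module.finrank ℤ (𝓞 K) : ℝ) * ∑' k : ℕ, (k : ℝ) ^ (-r) := by
  classical
  have hsummable : Summable (fun k : ℕ => (k : ℝ) ^ (-r)) :=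
    Real.summable_nat_rpow.mpr (by linarith)
  have hnn : ∀ k : ℕ, 0 ≤ (k : ℝ) ^ (-r) := fun k => Real.rpow_nonneg (Nat.cast_nonneg k) _
  rw [← Finset.sum_fiberwise_of_maps_to (g := Ideal.absNorm)
    (t := Q.image Ideal.absNorm) (fun P hP => Finset.mem_image_of_mem _ hP)]
  have hbound : ∀ k ∈ Q.image Ideal.absNorm,
      ∑ P ∈ Q.filter (fun P => Ideal.absNorm P = k), (Ideal.absNorm P : ℝ) ^ (-r)
        ≤ (Module.finrank ℤ (𝓞 K) : ℝ) * (k : ℝ) ^ (-r) := by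
    intro k hkmem
    obtain ⟨P0, hP0Q, hP0⟩ := Finset.mem_image.mp hkmem
    have hk2 : 2 ≤ k := hP0 ▸ two_le_absNorm_of_prime (hQ P0 hP0Q)
    have hcard : (Q.filter (fun P => Ideal.absNorm P = k)).card ≤ Module.finrank ℤ (𝓞 K) := by
      have hfin : {P : Ideal (𝓞 K) | Prime P ∧ Ideal.absNorm P = k}.Finite :=
        (Ideal.finite_setOf_absNorm_eq k).subset fun P hP => hP.2
      have hsub : Q.filter (fun P => Ideal.absNorm P = k) ⊆ hfin.toFinset := by
        intro P hP
        obtain ⟨hPQ, hPk⟩ := Finset.mem_filter.mp hP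
        exact hfin.mem_toFinset.mpr ⟨hQ P hPQ, hPk⟩
      refine le_trans (Finset.card_le_card hsub) ?_
      rw [← Set.ncard_eq_toFinset_card _ hfin]
      exact card_primes_of_norm_le k hk2
    calc ∑ P ∈ Q.filter (fun P => Ideal.absNorm P = k), (Ideal.absNorm P : ℝ) ^ (-r)
        = (Q.filter (fun P => Ideal.absNorm P = k)).card • (k : ℝ) ^ (-r) := by
          rw [Finset.sum_congr rfl (fun P hP => by
            rw [(Finset.mem_filter.mp hP).2]), Finset.sum_const]
      _ ≤ (Module.finrank ℤ (𝓞 K) : ℝ) * (k : ℝ) ^ (-r) := by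
          rw [nsmul_eq_mul]
          exact mul_le_mul_of_nonneg_right (by exact_mod_cast hcard) (hnn k)
  calc ∑ k ∈ Q.image Ideal.absNorm, ∑ P ∈ Q.filter (fun P => Ideal.absNorm P = k),
        (Ideal.absNorm P : ℝ) ^ (-r)
      ≤ ∑ k ∈ Q.image Ideal.absNorm, (Module.finrank ℤ (𝓞 K) : ℝ) * (k : ℝ) ^ (-r) :=
        Finset.sum_le_sum hbound
    _ = (Module.finrank ℤ (𝓞 K) : ℝ) * ∑ k ∈ Q.image Ideal.absNorm, (k : ℝ) ^ (-r) := by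
        rw [Finset.mul_sum]
    _ ≤ (Module.finrank ℤ (𝓞 K) : ℝ) * ∑' k : ℕ, (k : ℝ) ^ (-r) := by
        refine mul_le_mul_of_nonneg_left ?_ (Nat.cast_nonneg _)
        exact Summable.sum_le_tsum _ (fun k _ => hnn k) hsummable
end Summ

section Summ2
variable {K : Type*} [Field K] [NumberField K] {r : ℝ}

lemma geom_bound {x : ℝ} (h0 : 0 ≤ x) (h1 : x ≤ 1/2) (n : ℕ) :
    ∑ e ∈ Finset.range n, x ^ e ≤ Real.exp (2 * x) := by
  have hlt : x < 1 := by linarith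
  have hxn : 0 ≤ x ^ n := pow_nonneg h0 n
  rw [geom_sum_eq (ne_of_lt hlt) n]
  have key : (x ^ n - 1) / (x - 1) ≤ 1 + 2*x := by
    rw [div_le_iff_of_neg (by linarith : x - 1 < 0)]
    nlinarith
  exact key.trans (by nlinarith [Real.add_one_le_exp (2*x)])

lemma np_le_half (hr : 1 < r) {P : Ideal (𝓞 K)} (hP : Prime P) :
    (Ideal.absNorm P : ℝ) ^ (-r) ≤ 1/2 := by
  have h1 : (2:ℝ) ≤ (Ideal.absNorm P : ℝ) := by exact_mod_cast two_le_absNorm_of_prime hP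
  have h2 : (2:ℝ) ≤ (Ideal.absNorm P : ℝ) ^ r := by
    calc (2:ℝ) = 2 ^ (1:ℝ) := (Real.rpow_one 2).symm
      _ ≤ 2 ^ r := Real.rpow_le_rpow_of_exponent_le one_le_two (le_of_lt hr)
      _ ≤ (Ideal.absNorm P : ℝ) ^ r := Real.rpow_le_rpow (by norm_num) h1 (by linarith)
  rw [Real.rpow_neg (by linarith : (0:ℝ) ≤ (Ideal.absNorm P : ℝ))]
  calc ((Ideal.absNorm P : ℝ) ^ r)⁻¹ ≤ 2⁻¹ := inv_anti₀ (by norm_num) h2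
    _ = 1/2 := by norm_num

lemma pow_rpow_comm {a : ℝ} (ha : 0 ≤ a) (e : ℕ) (s : ℝ) : ((a^e : ℝ)) ^ s = (a ^ s) ^ e := by
  rw [← Real.rpow_natCast a e, ← Real.rpow_mul ha, mul_comm, Real.rpow_mul ha, Real.rpow_natCast]

open UniqueFactorizationMonoid in
lemma sum_ideals_le (hr : 1 < r) (F : Finset (Ideal (𝓞 K))) :
    ∑ I ∈ F, (Ideal.absNorm I : ℝ) ^ (-r)
      ≤ Real.exp (2 * ((Module.finrank ℤ (𝓞 K) : ℝ) * ∑' k : ℕ, (k : ℝ) ^ (-r))) := by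
  classical
  have hzero : ((Ideal.absNorm (0 : Ideal (𝓞 K)) : ℝ)) ^ (-r) = 0 := by
    rw [show Ideal.absNorm (0 : Ideal (𝓞 K)) = 0 by simpa using Ideal.absNorm_bot,
      Nat.cast_zero]
    exact Real.zero_rpow (by linarith)
  rw [← Finset.sum_erase F hzero]
  set F' := F.erase 0 with hF'
  have hF'0 : ∀ I ∈ F', I ≠ 0 := fun I hI => Finset.ne_of_mem_erase hI
  set Q : Finset (Ideal (𝓞 K)) := F'.biUnion (fun I => (factors I).toFinset) with hQ
  have hQprime : ∀ P ∈ Q, Prime P := by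
    intro P hP
    obtain ⟨I, hI, hPI⟩ := Finset.mem_biUnion.mp hP
    exact prime_of_factor P (Multiset.mem_toFinset.mp hPI)
  set E := F'.sup (fun I => (factors I).card) with hE
  have hprodid : ∀ I ∈ F', I = ∏ x ∈ Q.attach, x.1 ^ ((factors I).count x.1) := by
    intro I hI
    have h1 : (factors I).prod = I := associated_iff_eq.mp (factors_prod (hF'0 I hI))
    have h2 : (factors I).prod = ∏ P ∈ (factors I).toFinset, P ^ ((factors I).count P) :=
      Finset.prod_multiset_count _
    have hsub : (factors I).toFinset ⊆ Q := fun P hP =>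
      Finset.mem_biUnion.mpr ⟨I, hI, hP⟩
    have h3 : ∏ P ∈ (factors I).toFinset, P ^ ((factors I).count P)
        = ∏ P ∈ Q, P ^ ((factors I).count P) := by
      refine (Finset.prod_subset hsub (fun P _ hnot => ?_)).symm.symm
      rw [Multiset.count_eq_zero.mpr (fun hc => hnot (Multiset.mem_toFinset.mpr hc)), pow_zero]
    calc I = (factors I).prod := h1.symm
      _ = ∏ P ∈ (factors I).toFinset, P ^ ((factors I).count P) := h2
      _ = ∏ P ∈ Q, P ^ ((factors I).count P) := h3
      _ = ∏ x ∈ Q.attach, x.1 ^ ((factors I).count x.1) :=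
          (Finset.prod_attach Q fun P => P ^ ((factors I).count P)).symm
  have hval : ∀ I ∈ F', (Ideal.absNorm I : ℝ) ^ (-r)
      = ∏ x ∈ Q.attach, ((Ideal.absNorm x.1 : ℝ) ^ (-r)) ^ ((factors I).count x.1) := by
    intro I hI
    conv_lhs => rw [hprodid I hI]
    rw [map_prod]
    simp only [map_pow, Nat.cast_prod, Nat.cast_pow]
    rw [← Real.finset_prod_rpow _ _ (fun x _ => by positivity) (-r)]
    exact Finset.prod_congr rfl (fun x _ => pow_rpow_comm (by positivity) _ _)
  -- rewrite sum over F' as sum over image in pi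
  set t : Ideal (𝓞 K) → Finset ℕ := fun _ => Finset.range (E+1) with ht
  set ι : Ideal (𝓞 K) → (∀ a ∈ Q, ℕ) := fun I => (fun P _ => (factors I).count P) with hι
  have hmempi : ∀ I ∈ F', ι I ∈ Q.pi t := by
    intro I hI
    rw [Finset.mem_pi]
    intro P hP
    rw [ht]
    simp only [Finset.mem_range]
    have hc : (factors I).count P ≤ Multiset.card (factors I) := Multiset.count_le_card _ _
    have hle : Multiset.card (factors I) ≤ E :=
      Finset.le_sup (f := fun I => Multiset.card (factors I)) hI
    exact Nat.lt_succ_of_le (hc.trans hle)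
  have hinj : Set.InjOn ι F' := by
    intro I hI I' hI' hII
    rw [hprodid I hI, hprodid I' hI']
    refine Finset.prod_congr rfl (fun x _ => ?_)
    have := congrFun (congrFun (congrArg (fun f => f) hII) x.1)
    simp only [hι] at hII
    have : (factors I).count x.1 = (factors I').count x.1 := by
      exact congrFun (congrFun hII x.1) x.2
    rw [this]
  set g : (∀ a ∈ Q, ℕ) → ℝ :=
    fun p => ∏ x ∈ Q.attach, ((Ideal.absNorm x.1 : ℝ) ^ (-r)) ^ (p x.1 x.2) with hg
  have hgnn : ∀ p, 0 ≤ g p := fun p => Finset.prod_nonneg (fun x _ => by positivity)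
  calc ∑ I ∈ F', (Ideal.absNorm I : ℝ) ^ (-r) = ∑ I ∈ F', g (ι I) :=
        Finset.sum_congr rfl (fun I hI => hval I hI)
    _ = ∑ p ∈ F'.image ι, g p := (Finset.sum_image (fun I hI I' hI' => hinj hI hI')).symm
    _ ≤ ∑ p ∈ Q.pi t, g p := Finset.sum_le_sum_of_subset_of_nonneg
        (fun p hp => by
          obtain ⟨I, hI, rfl⟩ := Finset.mem_image.mp hp
          exact hmempi I hI)
        (fun p _ _ => hgnn p)
    _ = ∏ P ∈ Q, ∑ e ∈ Finset.range (E+1), ((Ideal.absNorm P : ℝ) ^ (-r)) ^ e := by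
        rw [Finset.prod_sum]
    _ ≤ ∏ P ∈ Q, Real.exp (2 * ((Ideal.absNorm P : ℝ) ^ (-r))) := by
        refine Finset.prod_le_prod (fun P _ => ?_) (fun P hP => ?_)
        · exact Finset.sum_nonneg (fun e _ => by positivity)
        · exact geom_bound (by positivity) (np_le_half hr (hQprime P hP)) _
    _ = Real.exp (∑ P ∈ Q, 2 * ((Ideal.absNorm P : ℝ) ^ (-r))) := (Real.exp_sum _ _).symm
    _ ≤ Real.exp (2 * ((Module.finrank ℤ (𝓞 K) : ℝ) * ∑' k : ℕ, (k : ℝ) ^ (-r))) := by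
        rw [Real.exp_le_exp, ← Finset.mul_sum]
        exact mul_le_mul_of_nonneg_left (sum_primes_le hr Q hQprime) (by norm_num)

lemma summable_ideals (hr : 1 < r) :
    Summable (fun I : Ideal (𝓞 K) => (Ideal.absNorm I : ℝ) ^ (-r)) :=
  summable_of_sum_le (fun I => Real.rpow_nonneg (Nat.cast_nonneg _) _)
    (fun F => sum_ideals_le hr F)

lemma summable_aK (hr : 1 < r) :
    Summable (fun n : ℕ => (aK K n : ℝ) * (n : ℝ) ^ (-r)) := by
  have hsum := summable_ideals (K := K) hr
  have he := (Equiv.sigmaFiberEquiv (fun I : Ideal (𝓞 K) => Ideal.absNorm I)).summable_iff.mpr hsum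
  have h2 := (summable_sigma_of_nonneg
    (fun x => Real.rpow_nonneg (Nat.cast_nonneg _) _)).mp he
  have h3 := h2.2
  refine h3.congr (fun n => ?_)
  haveI : Finite {I : Ideal (𝓞 K) // Ideal.absNorm I = n} :=
    (Ideal.finite_setOf_absNorm_eq n).to_subtype
  haveI := Fintype.ofFinite {I : Ideal (𝓞 K) // Ideal.absNorm I = n}
  have hcard : Fintype.card {I : Ideal (𝓞 K) // Ideal.absNorm I = n} = aK K n := by
    rw [← Nat.card_eq_fintype_card]
    exact Nat.card_coe_set_eq _
  rw [tsum_fintype]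
  have hterm : ∀ I : { x : Ideal (𝓞 K) // Ideal.absNorm x = n },
      (Ideal.absNorm ((Equiv.sigmaFiberEquiv fun I : Ideal (𝓞 K) =>
        Ideal.absNorm I) ⟨n, I⟩) : ℝ) ^ (-r) = (n : ℝ) ^ (-r) := by
    intro I
    simp only [Equiv.sigmaFiberEquiv, Equiv.coe_fn_mk, I.2]
  rw [Finset.sum_congr rfl (fun I _ => hterm I), Finset.sum_const, Finset.card_univ,
    nsmul_eq_mul, hcard]
end Summ2

section Sig
variable {K : Type*} [Field K] [NumberField K] {r : ℝ}

lemma finite_divisors (I : Ideal (𝓞 K)) (hI : I ≠ 0) : {J : Ideal (𝓞 K) | J ∣ I}.Finite := by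
  haveI := UniqueFactorizationMonoid.fintypeSubtypeDvd I hI
  have hfin : Finite {J : Ideal (𝓞 K) // J ∣ I} := Finite.of_fintype _
  exact Set.finite_coe_iff.mp hfin

noncomputable def vcount {K : Type*} [Field K] [NumberField K] (I : Ideal (𝓞 K)) (d : ℕ) : ℕ :=
  {J : Ideal (𝓞 K) | J ∣ I ∧ Ideal.absNorm J = d}.ncard

lemma vcount_eq_card (I : Ideal (𝓞 K)) (hI : I ≠ 0) (d : ℕ) :
    vcount I d = ((finite_divisors I hI).toFinset.filter
      (fun J => Ideal.absNorm J = d)).card := by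
  classical
  rw [vcount, ← Set.ncard_coe_finset]
  congr 1
  ext J
  simp [Set.Finite.mem_toFinset]

lemma vcount_le_aK (I : Ideal (𝓞 K)) (d : ℕ) : vcount I d ≤ aK K d :=
  Set.ncard_le_ncard (fun J hJ => hJ.2) (Ideal.finite_setOf_absNorm_eq d)

lemma vcount_one (I : Ideal (𝓞 K)) : vcount I 1 = 1 := by
  rw [vcount]
  rw [show {J : Ideal (𝓞 K) | J ∣ I ∧ Ideal.absNorm J = 1} = {⊤} from ?_]
  · exact Set.ncard_singleton _
  · ext J
    simp only [Set.mem_setOf_eq, Set.mem_singleton_iff, Ideal.absNorm_eq_one_iff]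
    have htop : (⊤ : Ideal (𝓞 K)) ∣ I := by rw [← Ideal.one_eq_top]; exact one_dvd I
    exact ⟨fun hJ => hJ.2, fun hJ => ⟨hJ ▸ htop, hJ⟩⟩

lemma sigma_eq_sum (I : Ideal (𝓞 K)) (hI : I ≠ 0) :
    sigmaK K r I = ∑ J ∈ (finite_divisors I hI).toFinset, (Ideal.absNorm J : ℝ) ^ (-r) := by
  classical
  haveI := UniqueFactorizationMonoid.fintypeSubtypeDvd I hI
  rw [sigmaK, tsum_fintype]
  refine (Finset.sum_subtype _ (fun J => ?_) (fun J => (Ideal.absNorm J : ℝ) ^ (-r))).symm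
  rw [Set.Finite.mem_toFinset]
  exact Iff.rfl

lemma one_le_of_mem_normimage (I : Ideal (𝓞 K)) (hI : I ≠ 0) (d : ℕ)
    (hd : d ∈ ((finite_divisors I hI).toFinset.image Ideal.absNorm)) : 1 ≤ d := by
  classical
  obtain ⟨J, hJ, rfl⟩ := Finset.mem_image.mp hd
  rw [Set.Finite.mem_toFinset] at hJ
  have hJ0 : J ≠ 0 := by rintro rfl; exact hI (zero_dvd_iff.mp hJ)
  have : Ideal.absNorm J ≠ 0 := by
    rw [Ne, Ideal.absNorm_eq_zero_iff]; simpa using hJ0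
  omega

lemma sigma_group (I : Ideal (𝓞 K)) (hI : I ≠ 0) (E : Finset ℕ)
    (hE : (finite_divisors I hI).toFinset.image Ideal.absNorm ⊆ E) :
    sigmaK K r I = ∑ d ∈ E, (vcount I d : ℝ) * (d : ℝ) ^ (-r) := by
  classical
  rw [sigma_eq_sum I hI]
  rw [← Finset.sum_fiberwise_of_maps_to (g := Ideal.absNorm) (t := E)
    (fun J hJ => hE (Finset.mem_image_of_mem _ hJ))]
  refine Finset.sum_congr rfl (fun d _ => ?_)
  rw [Finset.sum_congr rfl (fun J hJ => by rw [(Finset.mem_filter.mp hJ).2]),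
    Finset.sum_const, nsmul_eq_mul, vcount_eq_card I hI d]

lemma sep (hr : 1 < r)
    (hsum : Summable (fun n : ℕ => (aK K n : ℝ) * (n : ℝ) ^ (-r)))
    {I I' : Ideal (𝓞 K)} (hI : I ≠ 0) (hI' : I' ≠ 0) {d0 : ℕ}
    (hd2 : 2 ≤ d0) (hne : vcount I d0 ≠ vcount I' d0)
    (hagree : ∀ d, 2 ≤ d → d < d0 → vcount I d = vcount I' d) :
    (d0 : ℝ) ^ (-r) - (∑' n : {n : ℕ // d0 < n}, (aK K (n : ℕ) : ℝ) * ((n : ℕ) : ℝ) ^ (-r))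
      ≤ |sigmaK K r I - sigmaK K r I'| := by
  classical
  set E := ((finite_divisors I hI).toFinset.image Ideal.absNorm)
    ∪ ((finite_divisors I' hI').toFinset.image Ideal.absNorm) with hEdef
  have hone : ∀ d ∈ E, 1 ≤ d := by
    intro d hd
    rcases Finset.mem_union.mp hd with hd | hd
    · exact one_le_of_mem_normimage I hI d hd
    · exact one_le_of_mem_normimage I' hI' d hd
  have hdiff : sigmaK K r I - sigmaK K r I'
      = ∑ d ∈ E, ((vcount I d : ℝ) - (vcount I' d : ℝ)) * (d : ℝ) ^ (-r) := by
    rw [sigma_group I hI E Finset.subset_union_left,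
      sigma_group I' hI' E Finset.subset_union_right, ← Finset.sum_sub_distrib]
    exact Finset.sum_congr rfl (fun d _ => by ring)
  set w : ℕ → ℝ := fun d => (vcount I d : ℝ) - (vcount I' d : ℝ) with hw
  have hd0E : d0 ∈ E := by
    have : vcount I d0 ≠ 0 ∨ vcount I' d0 ≠ 0 := by omega
    rcases this with hv | hv
    · obtain ⟨J, hJ⟩ := Set.nonempty_of_ncard_ne_zero hv
      exact Finset.mem_union_left _ (Finset.mem_image.mpr
        ⟨J, (finite_divisors I hI).mem_toFinset.mpr hJ.1, hJ.2⟩)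
    · obtain ⟨J, hJ⟩ := Set.nonempty_of_ncard_ne_zero hv
      exact Finset.mem_union_right _ (Finset.mem_image.mpr
        ⟨J, (finite_divisors I' hI').mem_toFinset.mpr hJ.1, hJ.2⟩)
  -- split the sum
  have hsplit1 := Finset.sum_filter_add_sum_filter_not E (fun d => d < d0)
    (fun d => w d * (d : ℝ) ^ (-r))
  have hlow : ∑ d ∈ E.filter (fun d => d < d0), w d * (d : ℝ) ^ (-r) = 0 := by
    refine Finset.sum_eq_zero (fun d hd => ?_)
    obtain ⟨hdE, hdlt⟩ := Finset.mem_filter.mp hd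
    have h1 := hone d hdE
    have hwz : w d = 0 := by
      rcases Nat.lt_or_ge d 2 with h2 | h2
      · have : d = 1 := by omega
        rw [hw]; simp [this, vcount_one]
      · rw [hw]; simp [hagree d h2 hdlt]
    rw [hwz, zero_mul]
  set Erest := E.filter (fun d => ¬ d < d0) with hErest
  have hsplit2 := Finset.sum_filter_add_sum_filter_not Erest (fun d => d = d0)
    (fun d => w d * (d : ℝ) ^ (-r))
  have hEd0 : Erest.filter (fun d => d = d0) = {d0} := by
    ext d
    simp only [Finset.mem_filter, Finset.mem_singleton, hErest]
    constructor
    · rintro ⟨_, rfl⟩; rfl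
    · rintro rfl; exact ⟨⟨hd0E, by omega⟩, rfl⟩
  set E3 := Erest.filter (fun d => ¬ d = d0) with hE3
  have hgt : ∀ d ∈ E3, d0 < d := by
    intro d hd
    obtain ⟨hd1, hd2'⟩ := Finset.mem_filter.mp hd
    obtain ⟨_, hd3⟩ := Finset.mem_filter.mp hd1
    omega
  have hdiff2 : sigmaK K r I - sigmaK K r I'
      = w d0 * (d0 : ℝ) ^ (-r) + ∑ d ∈ E3, w d * (d : ℝ) ^ (-r) := by
    rw [hdiff, ← hsplit1, hlow, zero_add, ← hsplit2, hEd0, Finset.sum_singleton]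
  -- bound the tail
  have hgnn : ∀ n : ℕ, 0 ≤ (aK K n : ℝ) * (n : ℝ) ^ (-r) := fun n => by positivity
  have htail : |∑ d ∈ E3, w d * (d : ℝ) ^ (-r)|
      ≤ ∑' n : {n : ℕ // d0 < n}, (aK K (n : ℕ) : ℝ) * ((n : ℕ) : ℝ) ^ (-r) := by
    have h1 : |∑ d ∈ E3, w d * (d : ℝ) ^ (-r)| ≤ ∑ d ∈ E3, |w d| * (d : ℝ) ^ (-r) := by
      refine (Finset.abs_sum_le_sum_abs _ _).trans (le_of_eq ?_)
      refine Finset.sum_congr rfl (fun d _ => ?_)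
      rw [abs_mul, abs_of_nonneg (by positivity : (0:ℝ) ≤ (d : ℝ) ^ (-r))]
    have h2 : ∑ d ∈ E3, |w d| * (d : ℝ) ^ (-r)
        ≤ ∑ d ∈ E3, (aK K d : ℝ) * (d : ℝ) ^ (-r) := by
      refine Finset.sum_le_sum (fun d _ => ?_)
      refine mul_le_mul_of_nonneg_right ?_ (by positivity)
      have hv1 : vcount I d ≤ aK K d := vcount_le_aK I d
      have hv2 : vcount I' d ≤ aK K d := vcount_le_aK I' d
      have hv1' : (vcount I d : ℝ) ≤ (aK K d : ℝ) := by exact_mod_cast hv1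
      have hv2' : (vcount I' d : ℝ) ≤ (aK K d : ℝ) := by exact_mod_cast hv2
      have hn1 : (0:ℝ) ≤ (vcount I d : ℝ) := Nat.cast_nonneg _
      have hn2 : (0:ℝ) ≤ (vcount I' d : ℝ) := Nat.cast_nonneg _
      rw [hw, abs_sub_le_iff]
      constructor <;> linarith
    have h3 : ∑ d ∈ E3, (aK K d : ℝ) * (d : ℝ) ^ (-r)
        ≤ ∑' n : {n : ℕ // d0 < n}, (aK K (n : ℕ) : ℝ) * ((n : ℕ) : ℝ) ^ (-r) := by
      have hsubsum : Summable (fun n : {n : ℕ // d0 < n} =>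
          (aK K (n : ℕ) : ℝ) * ((n : ℕ) : ℝ) ^ (-r)) := hsum.subtype _
      have heq : ∑ x ∈ E3.subtype (fun d => d0 < d),
          (aK K (x : ℕ) : ℝ) * ((x : ℕ) : ℝ) ^ (-r)
            = ∑ d ∈ E3, (aK K d : ℝ) * (d : ℝ) ^ (-r) :=
        Finset.sum_subtype_of_mem (fun d => (aK K d : ℝ) * (d : ℝ) ^ (-r)) hgt
      rw [← heq]
      exact Summable.sum_le_tsum _ (fun x _ => hgnn _) hsubsum
    linarith
  -- conclude
  have habs1 : 1 ≤ |w d0| := by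
    have hne' : (vcount I d0 : ℤ) ≠ (vcount I' d0 : ℤ) := by exact_mod_cast hne
    have h1 : 1 ≤ |(vcount I d0 : ℤ) - (vcount I' d0 : ℤ)| :=
      Int.one_le_abs (sub_ne_zero.mpr hne')
    have h2 : (1:ℝ) ≤ |((vcount I d0 : ℤ) : ℝ) - ((vcount I' d0 : ℤ) : ℝ)| := by
      rw [← Int.cast_sub, ← Int.cast_abs]
      exact_mod_cast h1
    rw [hw]
    push_cast at h2 ⊢
    exact h2
  have hkey : (d0:ℝ) ^ (-r) - |∑ d ∈ E3, w d * (d : ℝ) ^ (-r)|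
      ≤ |sigmaK K r I - sigmaK K r I'| := by
    rw [hdiff2]
    have h1 : |w d0 * (d0 : ℝ) ^ (-r)| ≥ (d0:ℝ)^(-r) := by
      rw [abs_mul, abs_of_nonneg (by positivity : (0:ℝ) ≤ (d0 : ℝ) ^ (-r))]
      nlinarith [Real.rpow_nonneg (by positivity : (0:ℝ) ≤ (d0:ℝ)) (-r)]
    calc (d0:ℝ) ^ (-r) - |∑ d ∈ E3, w d * (d : ℝ) ^ (-r)|
        ≤ |w d0 * (d0 : ℝ) ^ (-r)| - |∑ d ∈ E3, w d * (d : ℝ) ^ (-r)| := by linarith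
      _ ≤ |w d0 * (d0 : ℝ) ^ (-r) + ∑ d ∈ E3, w d * (d : ℝ) ^ (-r)| := by
          have := abs_add_le (w d0 * (d0 : ℝ) ^ (-r) + ∑ d ∈ E3, w d * (d : ℝ) ^ (-r))
            (-(∑ d ∈ E3, w d * (d : ℝ) ^ (-r)))
          simp only [abs_neg, add_neg_cancel_right] at this
          linarith
  linarith
end Sig


section Cons
attribute [local instance] Classical.propDecidable
variable {K : Type*} [Field K] [NumberField K]

/-- The finite set of prime ideals of norm `n`. -/
noncomputable def primesOfNorm (K : Type*) [Field K] [NumberField K] (n : ℕ) :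
    Finset (Ideal (𝓞 K)) :=
  (((Ideal.finite_setOf_absNorm_eq n).subset (fun P hP => hP.2)) :
    {P : Ideal (𝓞 K) | P.IsPrime ∧ Ideal.absNorm P = n}.Finite).toFinset

lemma mem_primesOfNorm {n : ℕ} {P : Ideal (𝓞 K)} :
    P ∈ primesOfNorm K n ↔ P.IsPrime ∧ Ideal.absNorm P = n := by
  rw [primesOfNorm, Set.Finite.mem_toFinset]; rfl

lemma card_primesOfNorm (n : ℕ) : (primesOfNorm K n).card = bK K n := by
  rw [primesOfNorm, bK, Set.ncard_eq_toFinset_card _ _]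

/-- Nested family: the first `k` primes of norm `n` (in an arbitrary fixed enumeration). -/
noncomputable def primesS (K : Type*) [Field K] [NumberField K] (n k : ℕ) :
    Finset (Ideal (𝓞 K)) :=
  (((primesOfNorm K n).toList.take k).toFinset : Finset (Ideal (𝓞 K)))

lemma primesS_subset (n k : ℕ) : primesS K n k ⊆ primesOfNorm K n := by
  intro P hP
  rw [primesS, List.mem_toFinset] at hP
  have := List.take_subset k (primesOfNorm K n).toList hP
  rwa [Finset.mem_toList] at this

lemma primesS_mono (n : ℕ) {k k' : ℕ} (hk : k ≤ k') : primesS K n k ⊆ primesS K n k' := by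
  intro P hP
  rw [primesS, List.mem_toFinset] at hP ⊢
  have h1 : (primesOfNorm K n).toList.take k
      = ((primesOfNorm K n).toList.take k').take k := by
    rw [List.take_take, min_eq_left hk]
  rw [h1] at hP
  exact List.take_subset _ _ hP

lemma primesS_card {n k : ℕ} (hk : k ≤ bK K n) : (primesS K n k).card = k := by
  rw [primesS, List.toFinset_card_of_nodup
    ((Finset.nodup_toList _).sublist (List.take_sublist _ _))]
  rw [List.length_take, Finset.length_toList, card_primesOfNorm]
  omega

variable (h : ℕ)

/-- The squarefree test ideal attached to an exponent vector `e`. -/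
noncomputable def SeF (K : Type*) [Field K] [NumberField K] (h : ℕ) (e : ℕ → ℕ) :
    Finset (Ideal (𝓞 K)) :=
  (Finset.Icc 2 h).biUnion (fun n => primesS K n (e n))

noncomputable def Ie (K : Type*) [Field K] [NumberField K] (h : ℕ) (e : ℕ → ℕ) :
    Ideal (𝓞 K) :=
  ∏ P ∈ SeF K h e, P

lemma mem_SeF {e : ℕ → ℕ} {P : Ideal (𝓞 K)} (hP : P ∈ SeF K h e) :
    P.IsPrime ∧ 2 ≤ Ideal.absNorm P ∧ Ideal.absNorm P ≤ h := by
  obtain ⟨n, hn, hPS⟩ := Finset.mem_biUnion.mp hP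
  obtain ⟨hprime, hnorm⟩ := mem_primesOfNorm.mp (primesS_subset n (e n) hPS)
  rw [Finset.mem_Icc] at hn
  exact ⟨hprime, by omega, by omega⟩

lemma prime_of_mem_SeF {e : ℕ → ℕ} {P : Ideal (𝓞 K)} (hP : P ∈ SeF K h e) : Prime P := by
  obtain ⟨hprime, hnorm, _⟩ := mem_SeF h hP
  refine Ideal.prime_of_isPrime ?_ hprime
  intro hbot
  rw [hbot] at hnorm
  simp [Ideal.absNorm_bot] at hnorm

lemma Ie_ne_zero (e : ℕ → ℕ) : Ie K h e ≠ 0 := by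
  rw [Ie, Finset.prod_ne_zero_iff]
  exact fun P hP => (prime_of_mem_SeF h hP).ne_zero

lemma filter_SeF_eq {e : ℕ → ℕ} {n0 : ℕ} (hn0 : n0 ∈ Finset.Icc 2 h) :
    (SeF K h e).filter (fun P => Ideal.absNorm P = n0) = primesS K n0 (e n0) := by
  classical
  ext P
  simp only [Finset.mem_filter, SeF, Finset.mem_biUnion]
  constructor
  · rintro ⟨⟨n, hn, hPS⟩, hnorm⟩
    have := (mem_primesOfNorm.mp (primesS_subset n (e n) hPS)).2
    rwa [show n = n0 by omega] at hPS
  · intro hPS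
    exact ⟨⟨n0, hn0, hPS⟩, (mem_primesOfNorm.mp (primesS_subset n0 (e n0) hPS)).2⟩

lemma filter_SeF_lt {e e' : ℕ → ℕ} {n0 : ℕ}
    (hagree : ∀ n, n < n0 → n ∈ Finset.Icc 2 h → e n = e' n) :
    (SeF K h e).filter (fun P => Ideal.absNorm P < n0)
      = (SeF K h e').filter (fun P => Ideal.absNorm P < n0) := by
  classical
  have key : ∀ (f g : ℕ → ℕ), (∀ n, n < n0 → n ∈ Finset.Icc 2 h → f n = g n) →
      ∀ P : Ideal (𝓞 K),
      P ∈ (SeF K h f).filter (fun P => Ideal.absNorm P < n0) →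
        P ∈ (SeF K h g).filter (fun P => Ideal.absNorm P < n0) := by
    intro f g hfg P hP
    obtain ⟨hPS, hlt⟩ := Finset.mem_filter.mp hP
    obtain ⟨n, hn, hPSn⟩ := Finset.mem_biUnion.mp hPS
    have hnorm := (mem_primesOfNorm.mp (primesS_subset n (f n) hPSn)).2
    have hnn0 : n < n0 := by omega
    rw [hfg n hnn0 hn] at hPSn
    exact Finset.mem_filter.mpr ⟨Finset.mem_biUnion.mpr ⟨n, hn, hPSn⟩, hlt⟩
  ext P
  exact ⟨key e e' hagree P, key e' e (fun n hn hn2 => (hagree n hn hn2).symm) P⟩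

lemma vcount_Ie (e : ℕ → ℕ) {n0 : ℕ} (hn0 : 2 ≤ n0) :
    vcount (Ie K h e) n0 = ((SeF K h e).powerset.filter
      (fun U => ∏ P ∈ U, Ideal.absNorm P = n0)).card := by
  classical
  set T := SeF K h e with hT
  have hTprime : ∀ P ∈ T, Prime P := fun P hP => prime_of_mem_SeF h hP
  set X := T.powerset.filter (fun U => ∏ P ∈ U, Ideal.absNorm P = n0) with hXdef
  have hseteq : {J : Ideal (𝓞 K) | J ∣ Ie K h e ∧ Ideal.absNorm J = n0}
      = ↑(X.image (fun U => ∏ P ∈ U, P)) := by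
    ext J
    simp only [Set.mem_setOf_eq, Finset.coe_image, Set.mem_image, Finset.mem_coe,
      Finset.mem_filter, Finset.mem_powerset, hXdef]
    constructor
    · rintro ⟨hdvd, hnorm⟩
      obtain ⟨U, hUT, rfl⟩ := dvd_prod_of_primes hTprime hdvd
      refine ⟨U, ⟨hUT, ?_⟩, rfl⟩
      rw [← map_prod Ideal.absNorm _ _]
      exact hnorm
    · rintro ⟨U, ⟨hUT, hprod⟩, rfl⟩
      refine ⟨Finset.prod_dvd_prod_of_subset _ _ _ hUT, ?_⟩
      rw [map_prod Ideal.absNorm _ _]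
      exact hprod
  rw [vcount, hseteq, Set.ncard_coe_finset]
  refine Finset.card_image_of_injOn (fun U hU U' hU' hprodeq => ?_)
  have hUT : U ⊆ T := Finset.mem_powerset.mp (Finset.mem_filter.mp hU).1
  have hU'T : U' ⊆ T := Finset.mem_powerset.mp (Finset.mem_filter.mp hU').1
  exact prod_primes_injOn hTprime hUT hU'T hprodeq

lemma vcount_Ie_split (e : ℕ → ℕ) (he : ∀ n, e n ≤ bK K n) {n0 : ℕ}
    (hn0 : n0 ∈ Finset.Icc 2 h) :
    vcount (Ie K h e) n0 = e n0
      + ((((SeF K h e).filter (fun P => Ideal.absNorm P < n0)).powerset.filter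
          (fun U => ∏ P ∈ U, Ideal.absNorm P = n0)).card) := by
  classical
  rw [Finset.mem_Icc] at hn0
  rw [vcount_Ie h e (by omega)]
  rw [cnt_split (SeF K h e) Ideal.absNorm (fun P hP => (mem_SeF h hP).2.1) n0 (by omega)]
  congr 1
  rw [filter_SeF_eq h (Finset.mem_Icc.mpr hn0)]
  exact primesS_card (he n0)

lemma Ie_inj (e e' : ℕ → ℕ) (he : ∀ n, e n ≤ bK K n) (he' : ∀ n, e' n ≤ bK K n)
    (hv : ∀ n ∈ Finset.Icc 2 h, vcount (Ie K h e) n = vcount (Ie K h e') n) :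
    ∀ n ∈ Finset.Icc 2 h, e n = e' n := by
  classical
  intro n hn
  induction n using Nat.strong_induction_on with
  | _ n ih =>
    have hagree : ∀ m, m < n → m ∈ Finset.Icc 2 h → e m = e' m := fun m hm hmI =>
      ih m hm hmI
    have h1 := vcount_Ie_split h e he hn
    have h2 := vcount_Ie_split h e' he' hn
    rw [filter_SeF_lt h hagree] at h1
    have := hv n hn
    omega
end Cons


section Assembly
variable {K : Type*} [Field K] [NumberField K]

/-- The type of divisor-count vectors. -/
abbrev VTy (K : Type*) [Field K] [NumberField K] (h : ℕ) : Type _ :=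
  (d : (Finset.Icc 2 h : Finset ℕ)) → Fin (aK K (d : ℕ) + 1)

noncomputable def Vt (K : Type*) [Field K] [NumberField K] (h : ℕ)
    (I : Ideal (𝓞 K)) : VTy K h :=
  fun d => ⟨vcount I (d : ℕ), Nat.lt_succ_of_le (vcount_le_aK I _)⟩

noncomputable def AA (K : Type*) [Field K] [NumberField K] (r : ℝ) (h : ℕ)
    (v : VTy K h) : Set ℝ :=
  sigmaK K r '' {I : Ideal (𝓞 K) | I ≠ 0 ∧ Vt K h I = v}

/-- The type of exponent vectors. -/
abbrev TTy (K : Type*) [Field K] [NumberField K] (h : ℕ) : Type _ :=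
  (d : (Finset.Icc 2 h : Finset ℕ)) → Fin (bK K (d : ℕ) + 1)

noncomputable def etf (K : Type*) [Field K] [NumberField K] (h : ℕ) (t : TTy K h) :
    ℕ → ℕ :=
  fun n => if hn : n ∈ Finset.Icc 2 h then (t ⟨n, hn⟩ : ℕ) else 0

lemma etf_le (h : ℕ) (t : TTy K h) : ∀ n, etf K h t n ≤ bK K n := by
  intro n
  rw [etf]
  split
  · exact Fin.is_le _
  · exact Nat.zero_le _
end Assembly

/-- If `h ≥ 1` is such that `d^{-r} > ∑_{n > d} a_K(n) n^{-r}` for all `2 ≤ d ≤ h`, then the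
closure of `σ_{r,K}(I_K)` has at least `∏_{n=2}^{h} (b_K(n) + 1)` connected components. -/
theorem stmt12 (r : ℝ) (hr : 1 < r) (K : Type*) [Field K] [NumberField K]
    (h : ℕ) (hh : 1 ≤ h)
    (hyp : ∀ d : ℕ, 2 ≤ d → d ≤ h →
      ∑' n : {n : ℕ // d < n}, (aK K (n : ℕ) : ℝ) * ((n : ℕ) : ℝ) ^ (-r)
        < (d : ℝ) ^ (-r)) :
    ((∏ n ∈ Finset.Icc 2 h, (bK K n + 1) : ℕ) : Cardinal) ≤
      Cardinal.mk (ConnectedComponents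
        ↥(closure (sigmaK K r '' {I : Ideal (𝓞 K) | I ≠ 0}))) := by
  classical
  have hsum : Summable (fun n : ℕ => (aK K n : ℝ) * (n : ℝ) ^ (-r)) := summable_aK hr
  set C := closure (sigmaK K r '' {I : Ideal (𝓞 K) | I ≠ 0}) with hCdef
  have hcover : sigmaK K r '' {I : Ideal (𝓞 K) | I ≠ 0} = ⋃ v : VTy K h, AA K r h v := by
    ext x
    simp only [Set.mem_iUnion, AA, Set.mem_image, Set.mem_setOf_eq]
    constructor
    · rintro ⟨I, hI, rfl⟩
      exact ⟨Vt K h I, I, ⟨hI, rfl⟩, rfl⟩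
    · rintro ⟨v, I, ⟨hI, _⟩, rfl⟩
      exact ⟨I, hI, rfl⟩
  have hCunion : C = ⋃ v : VTy K h, closure (AA K r h v) := by
    have h1 : ⋃ v : VTy K h, AA K r h v
        = ⋃ v ∈ (Finset.univ : Finset (VTy K h)), AA K r h v := by simp
    have h2 : ⋃ v : VTy K h, closure (AA K r h v)
        = ⋃ v ∈ (Finset.univ : Finset (VTy K h)), closure (AA K r h v) := by simp
    rw [hCdef, hcover, h1, h2, Finset.closure_biUnion]
  -- disjointness of the closures of distinct pieces
  have hdisj : ∀ v w : VTy K h, v ≠ w →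
      closure (AA K r h v) ∩ closure (AA K r h w) = ∅ := by
    intro v w hvw
    have hex : ∃ d : ℕ, ∃ hd : d ∈ Finset.Icc 2 h, v ⟨d, hd⟩ ≠ w ⟨d, hd⟩ := by
      by_contra hc
      push_neg at hc
      exact hvw (funext fun d => hc d.1 d.2)
    set d0 := Nat.find hex with hd0def
    obtain ⟨hd0mem, hd0ne⟩ := Nat.find_spec hex
    have hd0' := Finset.mem_Icc.mp hd0mem
    set T := ∑' n : {n : ℕ // d0 < n}, (aK K (n : ℕ) : ℝ) * ((n : ℕ) : ℝ) ^ (-r) with hT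
    have heps : 0 < (d0 : ℝ) ^ (-r) - T := by
      have := hyp d0 hd0'.1 hd0'.2
      rw [hT]
      linarith
    set ε := (d0 : ℝ) ^ (-r) - T with hε
    rw [Set.eq_empty_iff_forall_notMem]
    rintro a ⟨hav, haw⟩
    obtain ⟨x, hxA, hxd⟩ := Metric.mem_closure_iff.mp hav (ε/2) (by linarith)
    obtain ⟨y, hyA, hyd⟩ := Metric.mem_closure_iff.mp haw (ε/2) (by linarith)
    obtain ⟨I, ⟨hI0, hIv⟩, rfl⟩ := hxA
    obtain ⟨I', ⟨hI'0, hI'w⟩, rfl⟩ := hyA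
    have hne : vcount I d0 ≠ vcount I' d0 := by
      intro hc
      apply hd0ne
      have hfe : Vt K h I ⟨d0, hd0mem⟩ = Vt K h I' ⟨d0, hd0mem⟩ := Fin.ext hc
      rwa [hIv, hI'w] at hfe
    have hagree : ∀ d, 2 ≤ d → d < d0 → vcount I d = vcount I' d := by
      intro d h2d hdd0
      have hdmem : d ∈ Finset.Icc 2 h := Finset.mem_Icc.mpr ⟨h2d, by omega⟩
      have hmin := Nat.find_min hex hdd0
      push_neg at hmin
      have := hmin hdmem
      rw [← hIv, ← hI'w] at this
      exact congrArg Fin.val this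
    have hsep := sep hr hsum hI0 hI'0 hd0'.1 hne hagree
    rw [← hT, ← hε] at hsep
    have htri : |sigmaK K r I - sigmaK K r I'|
        ≤ dist a (sigmaK K r I) + dist a (sigmaK K r I') := by
      rw [Real.dist_eq, Real.dist_eq]
      calc |sigmaK K r I - sigmaK K r I'|
          ≤ |sigmaK K r I - a| + |a - sigmaK K r I'| := abs_sub_le _ _ _
        _ = |a - sigmaK K r I| + |a - sigmaK K r I'| := by rw [abs_sub_comm]
    linarith
  -- each closure piece is clopen in C
  have hclopen : ∀ v : VTy K h,
      IsClopen (Subtype.val ⁻¹' closure (AA K r h v) : Set ↥C) := by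
    intro v
    constructor
    · exact (isClosed_closure).preimage continuous_subtype_val
    · rw [← isClosed_compl_iff]
      have hcomp : (Subtype.val ⁻¹' closure (AA K r h v) : Set ↥C)ᶜ
          = Subtype.val ⁻¹' (⋃ w ∈ Finset.univ.erase v, closure (AA K r h w)) := by
        ext z
        simp only [Set.mem_compl_iff, Set.mem_preimage, Set.mem_iUnion, Finset.mem_erase,
          Finset.mem_univ, and_true, exists_prop]
        constructor
        · intro hz
          have hzC : (z : ℝ) ∈ ⋃ w : VTy K h, closure (AA K r h w) := hCunion ▸ z.2
          obtain ⟨w, hw⟩ := Set.mem_iUnion.mp hzC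
          refine ⟨w, fun hc => hz (hc ▸ hw), hw⟩
        · rintro ⟨w, hwne, hzw⟩ 
          intro hzv
          have := hdisj w v hwne
          rw [Set.eq_empty_iff_forall_notMem] at this
          exact this (z : ℝ) ⟨hzw, hzv⟩
      rw [hcomp]
      exact (isClosed_biUnion_finset (fun w _ => isClosed_closure)).preimage
        continuous_subtype_val
  -- the injection
  have hmemC : ∀ t : TTy K h, sigmaK K r (Ie K h (etf K h t)) ∈ C := by
    intro t
    exact subset_closure ⟨Ie K h (etf K h t), Ie_ne_zero h _, rfl⟩
  have hmemA : ∀ t : TTy K h,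
      sigmaK K r (Ie K h (etf K h t)) ∈ AA K r h (Vt K h (Ie K h (etf K h t))) :=
    fun t => ⟨Ie K h (etf K h t), ⟨Ie_ne_zero h _, rfl⟩, rfl⟩
  set Φ : TTy K h → ConnectedComponents ↥C :=
    fun t => ConnectedComponents.mk ⟨sigmaK K r (Ie K h (etf K h t)), hmemC t⟩ with hΦ
  have hΦinj : Function.Injective Φ := by
    intro t t' htt
    have hVeq : Vt K h (Ie K h (etf K h t)) = Vt K h (Ie K h (etf K h t')) := by
      by_contra hvv
      have hcc := ConnectedComponents.coe_eq_coe'.mp htt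
      have hsub := (hclopen (Vt K h (Ie K h (etf K h t')))).connectedComponent_subset
        (x := (⟨sigmaK K r (Ie K h (etf K h t')), hmemC t'⟩ : ↥C))
        (subset_closure (hmemA t'))
      have hin := hsub hcc
      have hzin : sigmaK K r (Ie K h (etf K h t))
          ∈ closure (AA K r h (Vt K h (Ie K h (etf K h t')))) := hin
      have hzin2 : sigmaK K r (Ie K h (etf K h t))
          ∈ closure (AA K r h (Vt K h (Ie K h (etf K h t)))) := subset_closure (hmemA t)
      have := hdisj _ _ hvv
      rw [Set.eq_empty_iff_forall_notMem] at this
      exact this _ ⟨hzin2, hzin⟩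
    have hvcount : ∀ n ∈ Finset.Icc 2 h,
        vcount (Ie K h (etf K h t)) n = vcount (Ie K h (etf K h t')) n := by
      intro n hn
      have := congrFun hVeq ⟨n, hn⟩
      exact congrArg Fin.val this
    have hee := Ie_inj h (etf K h t) (etf K h t') (etf_le h t) (etf_le h t') hvcount
    funext d
    have := hee d.1 d.2
    rw [etf, etf, dif_pos d.2, dif_pos d.2] at this
    exact Fin.ext this
  have hcard : ((∏ n ∈ Finset.Icc 2 h, (bK K n + 1) : ℕ) : Cardinal)
      = Cardinal.mk (TTy K h) := by
    rw [Cardinal.mk_fintype]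
    congr 1
    rw [Fintype.card_pi]
    simp only [Fintype.card_fin]
    exact (Finset.prod_coe_sort (Finset.Icc 2 h) (fun n => bK K n + 1)).symm
  rw [hcard]
  exact Cardinal.mk_le_of_injective hΦinj
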